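/- arXiv:2202.00586 — 4 statements merged into one kernel-verified Lean document; each statement's English description precedes it below -/
import Mathlib

section
/- For all real x ≥ 0 and all positive integers n, the ratio h_{n/2}(x) = I_{n/2}(x)/I_{n/2-1}(x) of modified Bessel functions of the first kind satisfies 0 ≤ h_{n/2}(x) ≤ x/n. -/
set_option maxHeartbeats 1000000

/-- Modified Bessel function of the first kind of order `ν`. -/
noncomputable def besselI (ν x : ℝ) : ℝ :=
  ∑' k : ℕ, (x / 2) ^ (2 * (k : ℝ) + ν) / (k.factorial * Real.Gamma ((k : ℝ) + ν + 1))

/-- Ratio `h_ν(x) = I_ν(x) / I_{ν-1}(x)`. -/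
noncomputable def besselRatio (ν x : ℝ) : ℝ := besselI ν x / besselI (ν - 1) x


private lemma gamma_lb (μ : ℝ) (hμ : 1/2 ≤ μ) (k : ℕ) :
    Real.Gamma μ * (1/2)^k ≤ Real.Gamma ((k:ℝ) + μ) := by
  have hμ0 : (0:ℝ) < μ := lt_of_lt_of_le (by norm_num) hμ
  induction k with
  | zero => simp
  | succ k ih =>
    have hpos : (0:ℝ) < (k:ℝ) + μ := by positivity
    have hrec : Real.Gamma ((k:ℝ)+1+μ) = ((k:ℝ)+μ) * Real.Gamma ((k:ℝ)+μ) := by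
      rw [show (k:ℝ)+1+μ = ((k:ℝ)+μ)+1 by ring, Real.Gamma_add_one hpos.ne']
    have hG : 0 < Real.Gamma ((k:ℝ)+μ) := Real.Gamma_pos_of_pos hpos
    have hhalf : (1/2:ℝ) ≤ (k:ℝ) + μ := le_trans hμ (by linarith [Nat.cast_nonneg (α := ℝ) k])
    push_cast
    rw [hrec]
    calc Real.Gamma μ * (1/2)^(k+1) = (1/2) * (Real.Gamma μ * (1/2)^k) := by ring
      _ ≤ (1/2) * Real.Gamma ((k:ℝ)+μ) := by nlinarith
      _ ≤ ((k:ℝ)+μ) * Real.Gamma ((k:ℝ)+μ) := by nlinarith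

private lemma summable_term (c x : ℝ) (hc : -(1/2) ≤ c) (hx : 0 < x) :
    Summable fun k : ℕ => (x/2) ^ (2*(k:ℝ) + c) / (k.factorial * Real.Gamma ((k:ℝ) + c + 1)) := by
  have hx2 : (0:ℝ) < x/2 := by linarith
  have hμ : 1/2 ≤ c + 1 := by linarith
  have hΓc : 0 < Real.Gamma (c+1) := Real.Gamma_pos_of_pos (by linarith)
  apply Summable.of_nonneg_of_le (f := fun k : ℕ =>
      ((x/2)^c / Real.Gamma (c+1)) * ((2 * (x/2)^2)^k / k.factorial))
  · intro k
    have hΓ : 0 < Real.Gamma ((k:ℝ) + c + 1) := Real.Gamma_pos_of_pos (by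
      have := Nat.cast_nonneg (α := ℝ) k; linarith)
    positivity
  · intro k
    have hΓ : 0 < Real.Gamma ((k:ℝ) + c + 1) := Real.Gamma_pos_of_pos (by
      have := Nat.cast_nonneg (α := ℝ) k; linarith)
    have hfac : (0:ℝ) < k.factorial := by positivity
    have hlb : Real.Gamma (c+1) * (1/2)^k ≤ Real.Gamma ((k:ℝ) + c + 1) := by
      have := gamma_lb (c+1) hμ k
      rwa [show (k:ℝ) + (c+1) = (k:ℝ) + c + 1 by ring] at this
    have hexp : (x/2) ^ (2*(k:ℝ) + c) = ((x/2)^2)^k * (x/2)^c := by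
      rw [Real.rpow_add hx2, show (2*(k:ℝ)) = ((2*k : ℕ) : ℝ) by push_cast; ring,
        Real.rpow_natCast, pow_mul]
    have hA : (0:ℝ) ≤ ((x/2)^2)^k * (x/2)^c :=
      mul_nonneg (by positivity) (Real.rpow_pos_of_pos hx2 c).le
    have heq : ((x/2)^c / Real.Gamma (c+1)) * ((2 * (x/2)^2)^k / k.factorial)
        = ((x/2)^2)^k * (x/2)^c / (k.factorial * (Real.Gamma (c+1) * (1/2)^k)) := by
      rw [mul_pow]
      rw [show ((1:ℝ)/2)^k = ((2:ℝ)^k)⁻¹ by rw [one_div, inv_pow]]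
      field_simp
    rw [hexp, heq, div_le_div_iff₀ (mul_pos hfac hΓ)
      (mul_pos hfac (mul_pos hΓc (by positivity)))]
    nlinarith [mul_le_mul_of_nonneg_left hlb (mul_nonneg hA hfac.le)]
  · exact Summable.mul_left _ (Real.summable_pow_div_factorial (2*(x/2)^2))

theorem besselRatio_nonneg_and_le_div (x : ℝ) (hx : 0 ≤ x) (n : ℕ) (hn : 0 < n) :
    0 ≤ besselRatio ((n : ℝ) / 2) x ∧ besselRatio ((n : ℝ) / 2) x ≤ x / n := by
  set ν : ℝ := (n:ℝ)/2 with hνdef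
  have hn1 : (1:ℝ) ≤ (n:ℝ) := by exact_mod_cast hn
  have hν : 1/2 ≤ ν := by rw [hνdef]; linarith
  have hν0 : 0 < ν := lt_of_lt_of_le (by norm_num) hν
  rcases eq_or_lt_of_le hx with rfl | hx'
  · have h0 : besselI ν 0 = 0 := by
      unfold besselI
      convert tsum_zero with k
      rw [show (0:ℝ)/2 = 0 by norm_num, Real.zero_rpow]
      · simp
      · have := Nat.cast_nonneg (α := ℝ) k; positivity
    rw [besselRatio, h0, zero_div]
    constructor
    · exact le_refl 0
    · positivity
  · -- x > 0
    have hx2 : (0:ℝ) < x/2 := by linarith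
    -- nonneg terms
    have hterm_nonneg : ∀ (c : ℝ), -(1/2) ≤ c → ∀ k : ℕ,
        0 ≤ (x/2) ^ (2*(k:ℝ) + c) / (k.factorial * Real.Gamma ((k:ℝ) + c + 1)) := by
      intro c hc k
      have hΓ : 0 < Real.Gamma ((k:ℝ) + c + 1) := Real.Gamma_pos_of_pos (by
        have := Nat.cast_nonneg (α := ℝ) k; linarith)
      positivity
    have hcν : -(1/2:ℝ) ≤ ν := by linarith
    have hcν1 : -(1/2:ℝ) ≤ ν - 1 := by linarith
    have hSν := summable_term ν x hcν hx'
    have hSν1 := summable_term (ν-1) x hcν1 hx'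
    -- positivity of denominator
    have hden : 0 < besselI (ν-1) x := by
      unfold besselI
      apply Summable.tsum_pos hSν1 (fun k => by
        have := hterm_nonneg (ν-1) hcν1 k
        convert this using 3) 0
      have hΓ : (0:ℝ) < Real.Gamma ((0:ℝ) + (ν-1) + 1) := Real.Gamma_pos_of_pos (by linarith)
      simp only [Nat.cast_zero, Nat.factorial_zero, Nat.cast_one, one_mul]
      exact div_pos (Real.rpow_pos_of_pos hx2 _) hΓ
    -- termwise inequality
    have hkey : ∀ k : ℕ, (x/2) ^ (2*(k:ℝ) + ν) / (k.factorial * Real.Gamma ((k:ℝ) + ν + 1))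
        ≤ (x/n) * ((x/2) ^ (2*(k:ℝ) + (ν-1)) / (k.factorial * Real.Gamma ((k:ℝ) + (ν-1) + 1))) := by
      intro k
      have hk0 : (0:ℝ) ≤ (k:ℝ) := Nat.cast_nonneg k
      have hkν : 0 < (k:ℝ) + ν := by linarith
      have hΓ : 0 < Real.Gamma ((k:ℝ) + ν) := Real.Gamma_pos_of_pos hkν
      have hfac : (0:ℝ) < k.factorial := by positivity
      have hrec : Real.Gamma ((k:ℝ) + ν + 1) = ((k:ℝ)+ν) * Real.Gamma ((k:ℝ)+ν) :=
        Real.Gamma_add_one hkν.ne'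
      have hΓ1 : Real.Gamma ((k:ℝ) + (ν-1) + 1) = Real.Gamma ((k:ℝ)+ν) := by ring_nf
      have hexp : (x/2) ^ (2*(k:ℝ) + ν) = (x/2) ^ (2*(k:ℝ) + (ν-1)) * (x/2) := by
        rw [show 2*(k:ℝ) + ν = (2*(k:ℝ) + (ν-1)) + 1 by ring, Real.rpow_add hx2,
          Real.rpow_one]
      rw [hexp, hrec, hΓ1]
      have hxn : x / (n:ℝ) = (x/2) / ν := by
        rw [hνdef]; field_simp
      rw [hxn]
      rw [div_le_iff₀ (by positivity)]
      have hpow : (0:ℝ) ≤ (x/2) ^ (2*(k:ℝ) + (ν-1)) := (Real.rpow_pos_of_pos hx2 _).le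
      have h1 : (x/2) / ν * ((x/2) ^ (2*(k:ℝ) + (ν-1)) / (k.factorial * Real.Gamma ((k:ℝ)+ν)))
          * (k.factorial * (((k:ℝ)+ν) * Real.Gamma ((k:ℝ)+ν)))
          = (x/2) ^ (2*(k:ℝ) + (ν-1)) * (x/2) * (((k:ℝ)+ν) / ν) := by
        field_simp
      rw [h1]
      have h2 : (1:ℝ) ≤ ((k:ℝ)+ν)/ν := by
        rw [le_div_iff₀ hν0]; linarith
      have hA : 0 ≤ (x/2) ^ (2*(k:ℝ)+(ν-1)) * (x/2) := mul_nonneg hpow hx2.le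
      nlinarith [mul_le_mul_of_nonneg_left h2 hA]
    have hnum_nonneg : 0 ≤ besselI ν x := by
      unfold besselI
      exact tsum_nonneg (hterm_nonneg ν hcν)
    have hineq : besselI ν x ≤ (x/n) * besselI (ν-1) x := by
      unfold besselI
      rw [← tsum_mul_left]
      exact Summable.tsum_le_tsum hkey hSν (hSν1.mul_left _)
    constructor
    · exact div_nonneg hnum_nonneg hden.le
    · rw [besselRatio, div_le_iff₀ hden]
      linarith [hineq]
end

section
/- For all real x ≥ 0 and all positive integers n, the ratio h_{n/2}(x) = I_{n/2}(x)/I_{n/2-1}(x) of modified Bessel functions satisfies h_{n/2}(x) ≤ 1. -/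
open Real Filter

/-- auxiliary series -/
noncomputable def gser (μ y : ℝ) : ℕ → ℝ := fun k =>
  y ^ k / (k.factorial * Real.Gamma ((k : ℝ) + μ))

lemma gser_nonneg {μ y : ℝ} (hμ : 0 < μ) (hy : 0 ≤ y) (k : ℕ) : 0 ≤ gser μ y k := by
  unfold gser
  have h1 : (0:ℝ) < Real.Gamma ((k : ℝ) + μ) :=
    Real.Gamma_pos_of_pos (by positivity)
  positivity

lemma gser_succ {μ : ℝ} (y : ℝ) (hμ : 0 < μ) (k : ℕ) :
    gser μ y (k + 1) = y / (((k:ℝ) + 1) * ((k:ℝ) + μ)) * gser μ y k := by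
  unfold gser
  have h0 : ((k:ℝ) + μ) ≠ 0 := by positivity
  have hG : Real.Gamma (((k+1 : ℕ) : ℝ) + μ) = ((k:ℝ) + μ) * Real.Gamma ((k:ℝ) + μ) := by
    rw [show (((k+1 : ℕ) : ℝ) + μ) = ((k:ℝ) + μ) + 1 by push_cast; ring]
    exact Real.Gamma_add_one h0
  rw [hG, Nat.factorial_succ]
  have hG0 : Real.Gamma ((k:ℝ) + μ) ≠ 0 := ne_of_gt (Real.Gamma_pos_of_pos (by positivity))
  have hf : ((k.factorial : ℝ)) ≠ 0 := by positivity
  have hk1 : ((k:ℝ) + 1) ≠ 0 := by positivity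
  push_cast
  field_simp
  ring

lemma gser_summable {μ : ℝ} (hμ : 0 < μ) {y : ℝ} (hy : 0 ≤ y) : Summable (gser μ y) := by
  apply summable_of_ratio_norm_eventually_le (r := 1/2) (by norm_num)
  filter_upwards [eventually_atTop.2 ⟨Nat.ceil (2*y) + 1, fun k hk => hk⟩] with k hk
  have hk1 : 1 ≤ k := le_trans (Nat.le_add_left 1 _) hk
  have hky : 2 * y ≤ (k : ℝ) := by
    calc 2*y ≤ (Nat.ceil (2*y) : ℝ) := Nat.le_ceil _
    _ ≤ (k:ℝ) := by exact_mod_cast le_trans (Nat.le_succ _) hk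
  rw [Real.norm_of_nonneg (gser_nonneg hμ hy _), Real.norm_of_nonneg (gser_nonneg hμ hy _),
    gser_succ _ hμ]
  have hd : (0:ℝ) < ((k:ℝ) + 1) * ((k:ℝ) + μ) := by positivity
  have hratio : y / (((k:ℝ) + 1) * ((k:ℝ) + μ)) ≤ 1/2 := by
    rw [div_le_iff₀ hd]
    have hk1' : (1:ℝ) ≤ (k:ℝ) := by exact_mod_cast hk1
    nlinarith
  exact mul_le_mul_of_nonneg_right hratio (gser_nonneg hμ hy k)

lemma gser_tsum_pos {μ : ℝ} (hμ : 0 < μ) {y : ℝ} (hy : 0 ≤ y) : 0 < ∑' k, gser μ y k := by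
  refine Summable.tsum_pos (gser_summable hμ hy) (gser_nonneg hμ hy) 0 ?_
  unfold gser
  have h1 : (0:ℝ) < Real.Gamma (((0:ℕ) : ℝ) + μ) := Real.Gamma_pos_of_pos (by norm_num [hμ])
  simp only [pow_zero, Nat.factorial_zero, Nat.cast_one, one_mul]
  positivity

lemma besselI_eq {ν x : ℝ} (hx : 0 < x) :
    besselI ν x = (x/2) ^ ν * ∑' k, gser (ν+1) ((x/2)^2) k := by
  unfold besselI gser
  rw [← tsum_mul_left]
  refine tsum_congr fun k => ?_
  have ht : (0:ℝ) < x/2 := by linarith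
  have h1 : (x/2) ^ (2 * (k:ℝ) + ν) = (x/2) ^ ν * ((x/2)^2) ^ k := by
    rw [Real.rpow_add ht, mul_comm ((x/2) ^ (2*(k:ℝ)))]
    congr 1
    rw [show (2 * (k:ℝ)) = ((2*k : ℕ) : ℝ) by push_cast; ring, Real.rpow_natCast, pow_mul]
  rw [h1, show (k:ℝ) + ν + 1 = (k:ℝ) + (ν + 1) by ring, mul_div_assoc]

lemma key_pair {ν : ℝ} (hν : 1 ≤ ν) {t : ℝ} (ht : 0 < t) (k : ℕ) :
    t * gser (ν+1) (t^2) k ≤ (gser ν (t^2) k + gser ν (t^2) (k+1)) / 2 := by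
  have hν0 : (0:ℝ) < ν := by linarith
  have hν1 : (0:ℝ) < ν + 1 := by linarith
  set a := t * gser (ν+1) (t^2) k with ha
  set b := gser ν (t^2) k with hb
  set c := gser ν (t^2) (k+1) with hc
  have hbn : 0 ≤ b := gser_nonneg hν0 (by positivity) k
  have hcn : 0 ≤ c := gser_nonneg hν0 (by positivity) (k+1)
  have han : 0 ≤ a := mul_nonneg ht.le (gser_nonneg hν1 (by positivity) k)
  have hsq : a^2 ≤ b * c := by
    have hG : Real.Gamma ((k:ℝ) + (ν+1)) = ((k:ℝ) + ν) * Real.Gamma ((k:ℝ) + ν) := by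
      rw [show ((k:ℝ) + (ν+1)) = ((k:ℝ) + ν) + 1 by ring]
      exact Real.Gamma_add_one (by positivity)
    have hGpos : (0:ℝ) < Real.Gamma ((k:ℝ) + ν) := Real.Gamma_pos_of_pos (by positivity)
    rw [ha, hb, hc, gser_succ _ hν0]
    unfold gser
    rw [hG]
    have hfpos : (0:ℝ) < (k.factorial : ℝ) := by positivity
    have e1 : (t * ((t^2) ^ k / ((k.factorial : ℝ) * (((k:ℝ) + ν) * Real.Gamma ((k:ℝ) + ν)))))^2
        = (t^2 * ((t^2)^k)^2) /
          (((k.factorial : ℝ))^2 * ((k:ℝ)+ν)^2 * (Real.Gamma ((k:ℝ)+ν))^2) := by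
      field_simp
    have e2 : t^2 / (((k:ℝ) + 1) * ((k:ℝ) + ν)) *
          ((t^2) ^ k / ((k.factorial : ℝ) * Real.Gamma ((k:ℝ) + ν))) *
          ((t^2) ^ k / ((k.factorial : ℝ) * Real.Gamma ((k:ℝ) + ν)))
        = (t^2 * ((t^2)^k)^2) /
          (((k.factorial : ℝ))^2 * (((k:ℝ)+1) * ((k:ℝ)+ν)) * (Real.Gamma ((k:ℝ)+ν))^2) := by
      field_simp
    calc (t * ((t^2) ^ k / ((k.factorial : ℝ) * (((k:ℝ) + ν) * Real.Gamma ((k:ℝ) + ν)))))^2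
        = (t^2 * ((t^2)^k)^2) /
          (((k.factorial : ℝ))^2 * ((k:ℝ)+ν)^2 * (Real.Gamma ((k:ℝ)+ν))^2) := e1
      _ ≤ (t^2 * ((t^2)^k)^2) /
          (((k.factorial : ℝ))^2 * (((k:ℝ)+1) * ((k:ℝ)+ν)) * (Real.Gamma ((k:ℝ)+ν))^2) := by
          apply div_le_div_of_nonneg_left (by positivity) (by positivity)
          have h1 : ((k:ℝ)+1) * ((k:ℝ)+ν) ≤ ((k:ℝ)+ν)^2 := by nlinarith
          nlinarith [mul_le_mul_of_nonneg_left h1 (show (0:ℝ) ≤ (k.factorial:ℝ)^2 * Real.Gamma ((k:ℝ)+ν)^2 by positivity)]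
      _ = (t^2) ^ k / ((k.factorial : ℝ) * Real.Gamma ((k:ℝ) + ν)) *
          (t^2 / (((k:ℝ) + 1) * ((k:ℝ) + ν)) *
            ((t^2) ^ k / ((k.factorial : ℝ) * Real.Gamma ((k:ℝ) + ν)))) := by
          rw [← e2]; ring
  have hbc : b * c ≤ ((b + c)/2)^2 := by nlinarith [sq_nonneg (b - c)]
  refine le_of_pow_le_pow_left₀ (n := 2) two_ne_zero (by positivity) ?_
  calc a^2 ≤ b*c := hsq
  _ ≤ ((b+c)/2)^2 := hbc

lemma key_ineq {ν : ℝ} (hν : 1 ≤ ν) {t : ℝ} (ht : 0 < t) :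
    t * ∑' k, gser (ν+1) (t^2) k ≤ ∑' k, gser ν (t^2) k := by
  have hν0 : (0:ℝ) < ν := by linarith
  have hy : (0:ℝ) ≤ t^2 := by positivity
  have hA : Summable (gser (ν+1) (t^2)) := gser_summable (by linarith) hy
  have hB : Summable (gser ν (t^2)) := gser_summable hν0 hy
  have hB' : Summable (fun k => gser ν (t^2) (k+1)) := (summable_nat_add_iff 1).2 hB
  rw [← tsum_mul_left]
  have step1 : ∑' k, t * gser (ν+1) (t^2) k ≤ ∑' k, (gser ν (t^2) k + gser ν (t^2) (k+1)) / 2 :=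
    Summable.tsum_le_tsum (key_pair hν ht) (hA.mul_left t) ((hB.add hB').div_const 2)
  have step2 : ∑' k, (gser ν (t^2) k + gser ν (t^2) (k+1)) / 2
      = ((∑' k, gser ν (t^2) k) + ∑' k, gser ν (t^2) (k+1)) / 2 := by
    rw [tsum_div_const, Summable.tsum_add hB hB']
  have step3 : ∑' k, gser ν (t^2) (k+1) ≤ ∑' k, gser ν (t^2) k := by
    have h0 : ∑' k, gser ν (t^2) k = gser ν (t^2) 0 + ∑' k, gser ν (t^2) (k+1) :=
      Summable.tsum_eq_zero_add hB
    have := gser_nonneg hν0 hy 0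
    linarith
  calc ∑' k, t * gser (ν+1) (t^2) k ≤ _ := step1
    _ = _ := step2
    _ ≤ ∑' k, gser ν (t^2) k := by linarith

/-- `k! * Γ(k + 1/2) = (2k)! √π / 4^k` -/
lemma fact_gamma_half (k : ℕ) :
    (k.factorial : ℝ) * Real.Gamma ((k:ℝ) + 1/2) = ((2*k).factorial : ℝ) * Real.sqrt π / 4^k := by
  induction k with
  | zero =>
    norm_num
    exact Real.Gamma_one_half_eq
  | succ k ih =>
    have hG : Real.Gamma (((k+1:ℕ):ℝ) + 1/2) = ((k:ℝ) + 1/2) * Real.Gamma ((k:ℝ) + 1/2) := by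
      rw [show (((k+1:ℕ):ℝ) + 1/2) = ((k:ℝ) + 1/2) + 1 by push_cast; ring]
      exact Real.Gamma_add_one (by positivity)
    rw [hG, Nat.factorial_succ, show 2*(k+1) = (2*k+1)+1 by ring, Nat.factorial_succ,
      Nat.factorial_succ]
    push_cast
    linear_combination (((k:ℝ)+1) * ((k:ℝ)+1/2)) * ih

lemma besselI_neg_half {x : ℝ} (hx : 0 < x) :
    besselI (1/2 - 1) x = (x/2) ^ (-(1/2) : ℝ) / Real.sqrt π * Real.cosh x := by
  unfold besselI
  rw [Real.cosh_eq_tsum, ← tsum_mul_left]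
  refine tsum_congr fun k => ?_
  have ht : (0:ℝ) < x/2 := by linarith
  have hsπ : (0:ℝ) < Real.sqrt π := Real.sqrt_pos.2 Real.pi_pos
  have hfg := fact_gamma_half k
  have harg : (k:ℝ) + (1/2 - 1) + 1 = (k:ℝ) + 1/2 := by ring
  rw [harg]
  have hexp : (x/2) ^ (2*(k:ℝ) + (1/2 - 1)) = (x/2) ^ (-(1/2):ℝ) * ((x/2)^2) ^ k := by
    rw [show (2*(k:ℝ) + (1/2-1)) = (-(1/2):ℝ) + ((2*k : ℕ) : ℝ) by push_cast; ring,
      Real.rpow_add ht, Real.rpow_natCast, pow_mul]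
  rw [hexp]
  have hx2 : x ^ (2*k) = 4^k * ((x/2)^2)^k := by
    rw [← mul_pow, pow_mul]
    congr 1
    field_simp
    ring
  rw [hx2]
  have hfac : ((2*k).factorial : ℝ) ≠ 0 := by positivity
  have hG0 : ((k.factorial : ℝ) * Real.Gamma ((k:ℝ) + 1/2)) ≠ 0 := by
    rw [hfg]; positivity
  rw [hfg]
  have h4 : (4:ℝ)^k ≠ 0 := by positivity
  field_simp

lemma besselI_half {x : ℝ} (hx : 0 < x) :
    besselI (1/2) x = (x/2) ^ (-(1/2) : ℝ) / Real.sqrt π * Real.sinh x := by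
  unfold besselI
  rw [Real.sinh_eq_tsum, ← tsum_mul_left]
  refine tsum_congr fun k => ?_
  have ht : (0:ℝ) < x/2 := by linarith
  have hsπ : (0:ℝ) < Real.sqrt π := Real.sqrt_pos.2 Real.pi_pos
  -- k! * Γ(k + 1/2 + 1) = (2k+1)! √π / (2 * 4^k)
  have hfg : (k.factorial : ℝ) * Real.Gamma ((k:ℝ) + 1/2 + 1)
      = ((2*k+1).factorial : ℝ) * Real.sqrt π / (2 * 4^k) := by
    have hG : Real.Gamma ((k:ℝ) + 1/2 + 1) = ((k:ℝ) + 1/2) * Real.Gamma ((k:ℝ) + 1/2) :=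
      Real.Gamma_add_one (by positivity)
    rw [hG, show (k.factorial : ℝ) * (((k:ℝ) + 1/2) * Real.Gamma ((k:ℝ) + 1/2))
      = ((k:ℝ) + 1/2) * ((k.factorial : ℝ) * Real.Gamma ((k:ℝ) + 1/2)) by ring,
      fact_gamma_half, Nat.factorial_succ]
    have h4 : (4:ℝ)^k ≠ 0 := by positivity
    push_cast
    field_simp
  rw [hfg]
  have hexp : (x/2) ^ (2*(k:ℝ) + 1/2) = (x/2) ^ (-(1/2):ℝ) * (x/2) * ((x/2)^2) ^ k := by
    rw [show (2*(k:ℝ) + 1/2) = (-(1/2):ℝ) + 1 + ((2*k : ℕ) : ℝ) by push_cast; ring,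
      Real.rpow_add ht, Real.rpow_add ht, Real.rpow_one, Real.rpow_natCast, pow_mul]
  rw [hexp]
  have hx2 : x ^ (2*k+1) = x * (4^k * ((x/2)^2)^k) := by
    have h : (4:ℝ) * (x/2)^2 = x^2 := by ring
    rw [← mul_pow, h, pow_succ, pow_mul]
    ring
  rw [hx2]
  have hfac : ((2*k+1).factorial : ℝ) ≠ 0 := by positivity
  have h4 : (4:ℝ)^k ≠ 0 := by positivity
  field_simp

theorem besselRatio_le_one (x : ℝ) (hx : 0 ≤ x) (n : ℕ) (hn : 0 < n) :
    besselRatio ((n : ℝ) / 2) x ≤ 1 := by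
  rcases hx.eq_or_lt with h0 | hpos
  · -- x = 0
    subst h0
    have hz : besselI ((n:ℝ)/2) 0 = 0 := by
      unfold besselI
      have : ∀ k : ℕ, ((0:ℝ) / 2) ^ (2 * (k : ℝ) + (n:ℝ)/2) /
          (k.factorial * Real.Gamma ((k : ℝ) + (n:ℝ)/2 + 1)) = 0 := by
        intro k
        rw [zero_div, Real.zero_rpow, zero_div]
        have hn' : (0:ℝ) < (n:ℝ)/2 := by positivity
        positivity
      rw [tsum_congr this, tsum_zero]
    unfold besselRatio
    rw [hz, zero_div]
    norm_num
  · rcases eq_or_lt_of_le (Nat.one_le_iff_ne_zero.2 hn.ne') with h1 | h2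
    · -- n = 1
      have hn1 : n = 1 := h1.symm
      subst hn1
      unfold besselRatio
      simp only [Nat.cast_one]
      rw [besselI_half hpos, besselI_neg_half hpos]
      have hc : (0:ℝ) < (x/2) ^ (-(1/2) : ℝ) / Real.sqrt π := by
        have := Real.rpow_pos_of_pos (by linarith : (0:ℝ) < x/2) (-(1/2) : ℝ)
        have := Real.sqrt_pos.2 Real.pi_pos
        positivity
      rw [mul_div_mul_left _ _ hc.ne']
      rw [div_le_one (Real.cosh_pos x)]
      exact (Real.sinh_lt_cosh x).le
    · -- n ≥ 2
      have hn2 : 2 ≤ n := h2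
      set ν : ℝ := (n:ℝ)/2 with hν
      have hν1 : 1 ≤ ν := by
        rw [hν]
        have : (2:ℝ) ≤ (n:ℝ) := by exact_mod_cast hn2
        linarith
      have ht : (0:ℝ) < x/2 := by linarith
      unfold besselRatio
      rw [besselI_eq hpos, besselI_eq hpos]
      have hsub : ν - 1 + 1 = ν := by ring
      rw [hsub]
      have hS0 : 0 < ∑' k, gser ν ((x/2)^2) k := gser_tsum_pos (by linarith) (by positivity)
      have hden : 0 < (x/2) ^ (ν - 1) * ∑' k, gser ν ((x/2)^2) k := by
        have := Real.rpow_pos_of_pos ht (ν - 1)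
        positivity
      rw [div_le_one hden]
      have hpow : (x/2) ^ ν = (x/2) ^ (ν - 1) * (x/2) := by
        have h := Real.rpow_add ht (ν-1) 1
        rw [Real.rpow_one, sub_add_cancel] at h
        exact h
      rw [hpow, mul_assoc]
      exact mul_le_mul_of_nonneg_left (key_ineq hν1 ht) (Real.rpow_pos_of_pos ht _).le
end

section
/- Let f(x, ω) be a strictly totally positive (positive-definite) kernel, differentiable in x, and let η(ω) be a function that changes sign at most k times. If M(x) = ∫ η(ω) f(x, ω) dω is well defined, then M changes sign at most k times (variation-diminishing property of totally positive kernels). -/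
open MeasureTheory

/-- A kernel `f : ℝ × ℝ → ℝ` is strictly totally positive if it is nonnegative and all
determinants of matrices `(f (x i) (ω j))` with strictly increasing nodes are positive. -/
def StrictlyTotallyPositive (f : ℝ → ℝ → ℝ) : Prop :=
  (∀ x ω, 0 ≤ f x ω) ∧
    ∀ (m : ℕ) (x ω : Fin m → ℝ), StrictMono x → StrictMono ω →
      0 < (Matrix.of fun i j => f (x i) (ω j)).det

/-- `g` changes sign at most `k` times: there is no strictly increasing sequence of
`k + 2` points on which consecutive values of `g` have strictly opposite signs more than
`k` times. -/
def SignChangesAtMost (g : ℝ → ℝ) (k : ℕ) : Prop :=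
  ∀ (m : ℕ) (t : Fin (m + 1) → ℝ), StrictMono t →
    (∀ i : Fin m, g (t i.castSucc) * g (t i.succ) < 0) → m ≤ k

private lemma sign_mul_trans {a b c : ℝ} (hab : 0 < a * b) (hbc : b * c < 0) : a * c < 0 := by
  rcases mul_pos_iff.mp hab with ⟨ha, hb⟩ | ⟨ha, hb⟩
  · rcases mul_neg_iff.mp hbc with ⟨_, hc⟩ | ⟨hb', _⟩
    · exact mul_neg_of_pos_of_neg ha hc
    · linarith
  · rcases mul_neg_iff.mp hbc with ⟨hb', _⟩ | ⟨_, hc⟩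
    · linarith
    · exact mul_neg_of_neg_of_pos ha hc

private def AltEnd (η : ℝ → ℝ) (m : ℕ) (ω : ℝ) : Prop :=
  ∃ u : Fin (m+1) → ℝ, StrictMono u ∧
    (∀ i : Fin m, η (u i.castSucc) * η (u i.succ) < 0) ∧ u (Fin.last m) = ω

private lemma altEnd_zero (η : ℝ → ℝ) (ω : ℝ) : AltEnd η 0 ω := by
  refine ⟨fun _ => ω, ?_, ?_, rfl⟩
  · intro i j hij
    have hi := i.2; have hj := j.2
    exact absurd (Fin.lt_def.mp hij) (by omega)
  · intro i; exact absurd i.2 (by omega)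

private lemma altEnd_le {η : ℝ → ℝ} {k : ℕ} (hη : SignChangesAtMost η k)
    {m : ℕ} {ω : ℝ} (h : AltEnd η m ω) : m ≤ k := by
  obtain ⟨u, h1, h2, _⟩ := h
  exact hη m u h1 h2

private noncomputable def aIdx (η : ℝ → ℝ) (ω : ℝ) : ℕ := sSup {m | AltEnd η m ω}

private lemma aIdx_le {η : ℝ → ℝ} {k : ℕ} (hη : SignChangesAtMost η k) (ω : ℝ) :
    aIdx η ω ≤ k :=
  csSup_le ⟨0, altEnd_zero η ω⟩ fun _ h => altEnd_le hη h

private lemma aIdx_mem {η : ℝ → ℝ} {k : ℕ} (hη : SignChangesAtMost η k) (ω : ℝ) :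
    AltEnd η (aIdx η ω) ω :=
  Nat.sSup_mem ⟨0, altEnd_zero η ω⟩ ⟨k, fun _ h => altEnd_le hη h⟩

private lemma le_aIdx {η : ℝ → ℝ} {k : ℕ} (hη : SignChangesAtMost η k)
    {m : ℕ} {ω : ℝ} (h : AltEnd η m ω) : m ≤ aIdx η ω :=
  le_csSup ⟨k, fun _ h => altEnd_le hη h⟩ h

private lemma aIdx_mono_of_pos {η : ℝ → ℝ} {k : ℕ} (hη : SignChangesAtMost η k)
    {ω ω' : ℝ} (hlt : ω < ω') (hpos : 0 < η ω * η ω') : aIdx η ω ≤ aIdx η ω' := by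
  obtain ⟨u, hu, halt, hlast⟩ := aIdx_mem hη ω
  refine le_aIdx hη ⟨Function.update u (Fin.last _) ω', ?_, ?_, Function.update_self _ _ _⟩
  · intro i j hij
    have hi : i ≠ Fin.last _ := fun h => absurd (h ▸ hij) (not_lt.mpr (Fin.le_last j))
    rw [Function.update_of_ne hi]
    by_cases hj : j = Fin.last _
    · subst hj
      rw [Function.update_self]
      calc u i ≤ u (Fin.last _) := hu.monotone (Fin.le_last i)
        _ = ω := hlast
        _ < ω' := hlt
    · rw [Function.update_of_ne hj]; exact hu hij
  · intro i
    have hci : (i.castSucc : Fin (aIdx η ω + 1)) ≠ Fin.last _ := by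
      simp [Fin.ext_iff, Fin.coe_castSucc]; omega
    rw [Function.update_of_ne hci]
    by_cases hs : i.succ = Fin.last _
    · rw [hs, Function.update_self]
      have h1 : η (u i.castSucc) * η ω < 0 := by
        have := halt i; rwa [hs, hlast] at this
      have h2 : η ω' * η (u i.castSucc) < 0 :=
        sign_mul_trans (a := η ω') (b := η ω) (c := η (u i.castSucc))
          (by linarith [mul_comm (η ω) (η ω')])
          (by linarith [mul_comm (η (u i.castSucc)) (η ω)])
      linarith [mul_comm (η ω') (η (u i.castSucc))]
    · rw [Function.update_of_ne hs]; exact halt i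

private lemma aIdx_succ_of_neg {η : ℝ → ℝ} {k : ℕ} (hη : SignChangesAtMost η k)
    {ω ω' : ℝ} (hlt : ω < ω') (hneg : η ω * η ω' < 0) : aIdx η ω + 1 ≤ aIdx η ω' := by
  obtain ⟨u, hu, halt, hlast⟩ := aIdx_mem hη ω
  refine le_aIdx hη ⟨Fin.snoc u ω', ?_, ?_, Fin.snoc_last _ _⟩
  · intro i j hij
    rcases Fin.eq_castSucc_or_eq_last j with ⟨j', rfl⟩ | rfl
    · have hij' := lt_of_lt_of_le hij (Fin.le_last _)
      obtain ⟨i', rfl⟩ : ∃ i'', i = Fin.castSucc i'' :=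
        Fin.eq_castSucc_or_eq_last i |>.resolve_right (by rintro rfl; exact absurd hij' (lt_irrefl _))
      rw [Fin.snoc_castSucc, Fin.snoc_castSucc]
      exact hu (by exact_mod_cast Fin.castSucc_lt_castSucc_iff.mp hij)
    · obtain ⟨i', rfl⟩ : ∃ i'', i = Fin.castSucc i'' :=
        Fin.eq_castSucc_or_eq_last i |>.resolve_right (by rintro rfl; exact absurd hij (lt_irrefl _))
      rw [Fin.snoc_castSucc, Fin.snoc_last]
      calc u i' ≤ u (Fin.last _) := hu.monotone (Fin.le_last i')
        _ = ω := hlast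
        _ < ω' := hlt
  · intro i
    rcases Fin.eq_castSucc_or_eq_last i with ⟨i', rfl⟩ | rfl
    · rw [Fin.succ_castSucc, Fin.snoc_castSucc, Fin.snoc_castSucc]
      exact halt i'
    · rw [Fin.succ_last, Fin.snoc_last, Fin.snoc_castSucc, hlast]
      exact hneg

private lemma sign_mul_trans_pos {a b c : ℝ} (hab : 0 < a * b) (hbc : 0 < b * c) : 0 < a * c := by
  rcases mul_pos_iff.mp hab with ⟨ha, hb⟩ | ⟨ha, hb⟩
  · rcases mul_pos_iff.mp hbc with ⟨_, hc⟩ | ⟨hb', _⟩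
    · exact mul_pos ha hc
    · linarith
  · rcases mul_pos_iff.mp hbc with ⟨hb', _⟩ | ⟨_, hc⟩
    · linarith
    · exact mul_pos_of_neg_of_neg ha hc

private def Scl (η : ℝ → ℝ) (j : ℕ) : Set ℝ := {ω | η ω ≠ 0 ∧ aIdx η ω = j}

private def Ccl (η : ℝ → ℝ) (j : ℕ) : Set ℝ := convexHull ℝ (Scl η j)

private lemma Ccl_measurable (η : ℝ → ℝ) (j : ℕ) : MeasurableSet (Ccl η j) :=
  ((convex_convexHull ℝ _).ordConnected).measurableSet

private lemma Scl_lt {η : ℝ → ℝ} {k : ℕ} (hη : SignChangesAtMost η k)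
    {j j' : ℕ} {ω ω' : ℝ} (hω : ω ∈ Scl η j) (hω' : ω' ∈ Scl η j') (hjj : j < j') :
    ω < ω' := by
  obtain ⟨hne, ha⟩ := hω
  obtain ⟨hne', ha'⟩ := hω'
  by_contra hle
  push_neg at hle
  rcases eq_or_lt_of_le hle with rfl | hlt
  · omega
  · rcases lt_trichotomy (η ω' * η ω) 0 with hn | hz | hp
    · have := aIdx_succ_of_neg hη hlt hn; omega
    · exact mul_ne_zero hne' hne hz
    · have := aIdx_mono_of_pos hη hlt hp; omega


private lemma Scl_sign {η : ℝ → ℝ} {k : ℕ} (hη : SignChangesAtMost η k)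
    {j : ℕ} {ω ω' : ℝ} (hω : ω ∈ Scl η j) (hω' : ω' ∈ Scl η j) :
    0 < η ω * η ω' := by
  obtain ⟨hne, ha⟩ := hω
  obtain ⟨hne', ha'⟩ := hω'
  rcases lt_trichotomy (η ω * η ω') 0 with hn | hz | hp
  · exfalso
    rcases lt_trichotomy ω ω' with hlt | rfl | hgt
    · have := aIdx_succ_of_neg hη hlt hn; omega
    · exact absurd hn (not_lt.mpr (mul_self_nonneg _))
    · have := aIdx_succ_of_neg hη hgt (by linarith [mul_comm (η ω) (η ω')]); omega
  · exact absurd hz (mul_ne_zero hne hne')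
  · exact hp

private lemma mem_Scl_of_mem_Ccl {η : ℝ → ℝ} {k : ℕ} (hη : SignChangesAtMost η k)
    {j : ℕ} {ω : ℝ} (hω : ω ∈ Ccl η j) (hne : η ω ≠ 0) : ω ∈ Scl η j := by
  have h1 : ∃ s ∈ Scl η j, s ≤ ω := by
    by_contra hall
    push_neg at hall
    have : Ccl η j ⊆ Set.Ioi ω := convexHull_min (fun s hs => hall s hs) (convex_Ioi ω)
    exact lt_irrefl ω (this hω)
  have h2 : ∃ s ∈ Scl η j, ω ≤ s := by
    by_contra hall
    push_neg at hall
    have : Ccl η j ⊆ Set.Iio ω := convexHull_min (fun s hs => hall s hs) (convex_Iio ω)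
    exact lt_irrefl ω (this hω)
  obtain ⟨s1, hs1, hs1le⟩ := h1
  obtain ⟨s2, hs2, hs2le⟩ := h2
  rcases eq_or_lt_of_le hs1le with rfl | hlt1
  · exact hs1
  rcases eq_or_lt_of_le hs2le with rfl | hlt2
  · exact hs2
  have hsign := Scl_sign hη hs1 hs2
  rcases lt_trichotomy (η s1 * η ω) 0 with hn | hz | hp
  · exfalso
    have hb := aIdx_succ_of_neg hη hlt1 hn
    have hc : η ω * η s2 < 0 := by
      have := sign_mul_trans (a := η s2) (b := η s1) (c := η ω)
        (by linarith [mul_comm (η s1) (η s2)]) hn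
      linarith [mul_comm (η s2) (η ω)]
    have := aIdx_succ_of_neg hη hlt2 hc
    obtain ⟨_, h1'⟩ := hs1; obtain ⟨_, h2'⟩ := hs2; omega
  · exact absurd hz (mul_ne_zero hs1.1 hne)
  · have hup := aIdx_mono_of_pos hη hlt1 hp
    have hq : 0 < η ω * η s2 :=
      sign_mul_trans_pos (a := η ω) (b := η s1) (c := η s2)
        (by linarith [mul_comm (η s1) (η ω)]) hsign
    have hdn := aIdx_mono_of_pos hη hlt2 hq
    obtain ⟨_, h1'⟩ := hs1; obtain ⟨_, h2'⟩ := hs2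
    exact ⟨hne, by omega⟩

private lemma Ccl_sep_aux {η : ℝ → ℝ} {k : ℕ} (hη : SignChangesAtMost η k)
    {j j' : ℕ} (hjj : j < j') {t t' : ℝ}
    (ht : t ∈ Ccl η j ∩ Ccl η j') (ht' : t' ∈ Ccl η j ∩ Ccl η j') (hlt : t < t') : False := by
  have hub : ∀ s' ∈ Scl η j', t' ≤ s' := by
    intro s' hs'
    have hsub : Ccl η j ⊆ Set.Iic s' :=
      convexHull_min (fun s hs => (Scl_lt hη hs hs' hjj).le) (convex_Iic s')
    exact hsub ht'.1
  have hsub2 : Ccl η j' ⊆ Set.Ici t' := convexHull_min (fun s hs => hub s hs) (convex_Ici t')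
  exact absurd (hsub2 ht.2) (not_le.mpr hlt)

private lemma Ccl_sep {η : ℝ → ℝ} {k : ℕ} (hη : SignChangesAtMost η k)
    {j j' : ℕ} (hne : j ≠ j') : (Ccl η j ∩ Ccl η j').Subsingleton := by
  intro t ht t' ht'
  by_contra hc
  rcases hne.lt_or_gt with h | h
  · rcases Ne.lt_or_gt hc with hlt | hlt
    · exact Ccl_sep_aux hη h ht ht' hlt
    · exact Ccl_sep_aux hη h ht' ht hlt
  · rw [Set.inter_comm] at ht ht'
    rcases Ne.lt_or_gt hc with hlt | hlt
    · exact Ccl_sep_aux hη h ht ht' hlt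
    · exact Ccl_sep_aux hη h ht' ht hlt

private lemma alt_sign {n : ℕ} (v : Fin (n+1) → ℝ) (h0 : v 0 ≠ 0)
    (h : ∀ i : Fin n, v i.castSucc * v i.succ < 0) :
    ∀ i : Fin (n+1), 0 < (-1 : ℝ)^(i : ℕ) * (v 0 * v i) := by
  intro i
  induction i using Fin.induction with
  | zero => simpa using mul_self_pos.mpr h0
  | succ i ih =>
    have hp := h i
    have h1 : 0 < ((-1 : ℝ)^((i : ℕ)) * v 0) * v i.castSucc := by
      have := ih
      simp only [Fin.coe_castSucc] at this
      linarith [this]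
    have h2 := sign_mul_trans h1 hp
    have h3 : (-1 : ℝ)^((i:ℕ)+1) * (v 0 * v i.succ)
        = -(((-1:ℝ)^(i:ℕ) * v 0) * v i.succ) := by ring
    rw [Fin.val_succ, h3]
    linarith

private lemma det_integral {n : ℕ} (ψ : Fin n → ℝ → ℝ) (F : Fin n → ℝ → ℝ)
    (h : ∀ s l, Integrable (fun ω => ψ l ω * F s ω)) :
    (Matrix.of fun s l : Fin n => ∫ ω, ψ l ω * F s ω).det
      = ∫ ω : Fin n → ℝ, (Matrix.of fun s l : Fin n => ψ l (ω l) * F s (ω l)).det := by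
  simp only [Matrix.det_apply', Matrix.of_apply]
  rw [integral_finset_sum]
  · refine Finset.sum_congr rfl fun σ _ => ?_
    rw [integral_const_mul, ← MeasureTheory.integral_fintype_prod_volume_eq_prod (ι := Fin n)
      (fun l ω => ψ l ω * F (σ l) ω)]
  · intro σ _
    exact (Integrable.fintype_prod (f := fun l ω => ψ l ω * F (σ l) ω)
      (fun l => h (σ l) l)).const_mul _

/-- Karlin's variation-diminishing theorem for strictly totally positive kernels. -/
theorem variation_diminishing (f : ℝ → ℝ → ℝ) (η : ℝ → ℝ) (k : ℕ)
    (hf : StrictlyTotallyPositive f)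
    (hdiff : ∀ ω, Differentiable ℝ fun x => f x ω)
    (hη : SignChangesAtMost η k)
    (hint : ∀ x, Integrable (fun ω => η ω * f x ω)) :
    SignChangesAtMost (fun x => ∫ ω, η ω * f x ω) k := by
  intro m t ht halt
  by_contra hm
  push_neg at hm
  set M : ℝ → ℝ := fun x => ∫ ω, η ω * f x ω with hMdef
  have hk2 : k + 2 ≤ m + 1 := by omega
  set x : Fin (k + 2) → ℝ := fun i => t (Fin.castLE hk2 i) with hxdef
  have hx : StrictMono x := fun i j hij => ht (by simp only [Fin.lt_def, Fin.coe_castLE]; exact hij)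
  set v : Fin (k + 2) → ℝ := fun i => M (x i) with hvdef
  have hvalt : ∀ i : Fin (k + 1), v i.castSucc * v i.succ < 0 := by
    intro i
    have hi : (i : ℕ) < m := by omega
    have h := halt ⟨i, hi⟩
    have e1 : x i.castSucc = t (⟨i, hi⟩ : Fin m).castSucc :=
      congrArg t (Fin.ext (by simp))
    have e2 : x i.succ = t (⟨i, hi⟩ : Fin m).succ :=
      congrArg t (Fin.ext (by simp))
    simpa [hvdef, e1, e2] using h
  have h00 : v 0 ≠ 0 := by
    intro h0
    have := hvalt 0
    rw [Fin.castSucc_zero, h0, zero_mul] at this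
    exact lt_irrefl 0 this
  have hsign := alt_sign v h00 hvalt
  -- positivity of f
  have hfpos : ∀ y ω, 0 < f y ω := by
    intro y ω
    have hsm : ∀ g : Fin 1 → ℝ, StrictMono g := by
      intro g i j hij
      have hi := i.2; have hj := j.2
      exact absurd (Fin.lt_def.mp hij) (by omega)
    have h1 := hf.2 1 (fun _ => y) (fun _ => ω) (hsm _) (hsm _)
    simpa [Matrix.det_fin_one] using h1
  -- columns
  set colInt : ℕ → ℝ → ℝ := fun j y => ∫ ω, (Ccl η j).indicator η ω * f y ω with hcoldef
  set ν : ℕ → ℝ := fun j => ∫ ω, |(Ccl η j).indicator η ω| * f (x 0) ω with hνdef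
  have hIndEq : ∀ (j : ℕ) (y : ℝ),
      (fun ω => (Ccl η j).indicator (fun ω' => η ω' * f y ω') ω)
        = fun ω => (Ccl η j).indicator η ω * f y ω := by
    intro j y
    funext ω
    by_cases h : ω ∈ Ccl η j <;> simp [Set.indicator_of_mem, Set.indicator_of_notMem, h]
  have hIntInd : ∀ (j : ℕ) (y : ℝ),
      Integrable (fun ω => (Ccl η j).indicator η ω * f y ω) := by
    intro j y
    rw [← hIndEq]
    exact (hint y).indicator (Ccl_measurable η j)
  have hIntAbs : ∀ (j : ℕ) (y : ℝ),
      Integrable (fun ω => |(Ccl η j).indicator η ω| * f y ω) := by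
    intro j y
    have h1 : (fun ω => |(Ccl η j).indicator η ω| * f y ω)
        = fun ω => |(Ccl η j).indicator η ω * f y ω| := by
      funext ω
      rw [abs_mul, abs_of_nonneg (hf.1 y ω)]
    rw [h1]
    exact (hIntInd j y).abs
  -- decomposition into classes
  have hdecomp : ∀ y0 : ℝ, M y0 = ∑ j ∈ Finset.range (k + 1), colInt j y0 := by
    intro y0
    classical
    set Dcl : ℕ → Set ℝ := fun j => Ccl η j \ ⋃ (j' : ℕ) (_ : j' < j), Ccl η j' with hDdef
    have hDmeas : ∀ j, MeasurableSet (Dcl j) := fun j =>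
      (Ccl_measurable η j).diff
        (MeasurableSet.iUnion fun j' => MeasurableSet.iUnion fun _ => Ccl_measurable η j')
    have hpt : ∀ ω, η ω * f y0 ω
        = ∑ j ∈ Finset.range (k + 1), (Dcl j).indicator (fun ω' => η ω' * f y0 ω') ω := by
      intro ω
      by_cases hη0 : η ω = 0
      · rw [hη0, zero_mul]
        symm
        apply Finset.sum_eq_zero
        intro j _
        by_cases hmem : ω ∈ Dcl j
        · rw [Set.indicator_of_mem hmem, hη0, zero_mul]
        · rw [Set.indicator_of_notMem hmem]
      · have hex : ∃ j, ω ∈ Ccl η j := ⟨aIdx η ω, subset_convexHull ℝ _ ⟨hη0, rfl⟩⟩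
        have hj0mem : ω ∈ Ccl η (Nat.find hex) := Nat.find_spec hex
        have hj0min : ∀ j' < Nat.find hex, ω ∉ Ccl η j' := fun j' h => Nat.find_min hex h
        have hj0le : Nat.find hex ≤ k := by
          have h1 : Nat.find hex ≤ aIdx η ω := Nat.find_le (subset_convexHull ℝ _ ⟨hη0, rfl⟩)
          exact h1.trans (aIdx_le hη ω)
        have hDj0 : ω ∈ Dcl (Nat.find hex) := by
          refine ⟨hj0mem, ?_⟩
          simp only [Set.mem_iUnion, not_exists]
          intro j' hj'
          exact hj0min j' hj'
        rw [Finset.sum_eq_single_of_mem (Nat.find hex) (Finset.mem_range.mpr (by omega))]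
        · rw [Set.indicator_of_mem hDj0]
        · intro j _ hne
          apply Set.indicator_of_notMem
          intro hmem
          rcases lt_or_gt_of_ne hne with hlt | hgt
          · exact hj0min j hlt hmem.1
          · exact hmem.2 (Set.mem_iUnion.mpr ⟨Nat.find hex, Set.mem_iUnion.mpr ⟨hgt, hj0mem⟩⟩)
    have hMy : M y0 = ∫ ω, ∑ j ∈ Finset.range (k + 1),
        (Dcl j).indicator (fun ω' => η ω' * f y0 ω') ω :=
      integral_congr_ae (Filter.Eventually.of_forall hpt)
    rw [hMy, integral_finset_sum _ (fun j _ => (hint y0).indicator (hDmeas j))]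
    apply Finset.sum_congr rfl
    intro j hj
    have hnull : volume (Ccl η j \ Dcl j) = 0 := by
      have hsub : Ccl η j \ Dcl j ⊆ ⋃ (j' : ℕ) (_ : j' < j), (Ccl η j ∩ Ccl η j') := by
        rintro ω ⟨h1, h2⟩
        have h3 : ω ∈ ⋃ (j' : ℕ) (_ : j' < j), Ccl η j' := by
          by_contra h4
          exact h2 ⟨h1, h4⟩
        obtain ⟨j', hj'⟩ := Set.mem_iUnion.mp h3
        obtain ⟨hlt, hmem'⟩ := Set.mem_iUnion.mp hj'
        exact Set.mem_iUnion.mpr ⟨j', Set.mem_iUnion.mpr ⟨hlt, ⟨h1, hmem'⟩⟩⟩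
      refine measure_mono_null hsub ?_
      refine measure_iUnion_null fun j' => measure_iUnion_null fun hlt => ?_
      exact ((Ccl_sep hη (show j ≠ j' by omega)).measure_zero volume)
    have hae : (Dcl j).indicator (fun ω' => η ω' * f y0 ω')
        =ᵐ[volume] (Ccl η j).indicator (fun ω' => η ω' * f y0 ω') := by
      have h0 := measure_eq_zero_iff_ae_notMem.mp hnull
      filter_upwards [h0] with ω hω
      by_cases hD : ω ∈ Dcl j
      · rw [Set.indicator_of_mem hD, Set.indicator_of_mem hD.1]
      · have hC : ω ∉ Ccl η j := fun hC => hω ⟨hC, hD⟩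
        rw [Set.indicator_of_notMem hD, Set.indicator_of_notMem hC]
    calc ∫ ω, (Dcl j).indicator (fun ω' => η ω' * f y0 ω') ω
        = ∫ ω, (Ccl η j).indicator (fun ω' => η ω' * f y0 ω') ω := integral_congr_ae hae
      _ = colInt j y0 := by rw [hIndEq j y0]
  -- the active classes
  set J : Finset ℕ := (Finset.range (k + 1)).filter (fun j => 0 < ν j) with hJdef
  have hcol0 : ∀ j ∈ Finset.range (k + 1), j ∉ J → ∀ y, colInt j y = 0 := by
    intro j hjr hjJ y0
    have hνnn : 0 ≤ ν j := integral_nonneg fun ω => mul_nonneg (abs_nonneg _) (hf.1 _ _)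
    have hν0 : ν j = 0 := by
      by_contra hne
      exact hjJ (Finset.mem_filter.mpr ⟨hjr, lt_of_le_of_ne hνnn (Ne.symm hne)⟩)
    have hae0 : (fun ω => |(Ccl η j).indicator η ω| * f (x 0) ω) =ᵐ[volume] 0 :=
      (integral_eq_zero_iff_of_nonneg
        (fun ω => mul_nonneg (abs_nonneg _) (hf.1 _ _)) (hIntAbs j (x 0))).mp hν0
    have hae : (fun ω => (Ccl η j).indicator η ω * f y0 ω) =ᵐ[volume] 0 := by
      filter_upwards [hae0] with ω hω
      simp only [Pi.zero_apply] at hω ⊢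
      have hind : (Ccl η j).indicator η ω = 0 := by
        by_contra hindne
        have h1 : 0 < |(Ccl η j).indicator η ω| * f (x 0) ω :=
          mul_pos (abs_pos.mpr hindne) (hfpos _ _)
        rw [hω] at h1
        exact lt_irrefl 0 h1
      rw [hind, zero_mul]
    have h5 := integral_congr_ae hae
    simp only [Pi.zero_apply, integral_zero] at h5
    exact h5
  have hdecompJ : ∀ i : Fin (k + 2), v i = ∑ j ∈ J, colInt j (x i) := by
    intro i
    rw [hvdef]
    simp only
    rw [hdecomp (x i)]
    symm
    apply Finset.sum_subset (Finset.filter_subset _ _)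
    intro j hj hjJ
    exact hcol0 j hj hjJ (x i)
  set p : ℕ := J.card with hpdef
  have hpk : p ≤ k + 1 := by
    calc p ≤ (Finset.range (k+1)).card := Finset.card_filter_le _ _
    _ = k + 1 := Finset.card_range _
  have hp1 : 1 ≤ p := by
    by_contra hp0
    have : J = ∅ := Finset.card_eq_zero.mp (by omega)
    have h0 := hdecompJ 0
    rw [this, Finset.sum_empty] at h0
    exact h00 h0
  set e : Fin p ≃o { x // x ∈ J } := J.orderIsoOfFin rfl with hedef
  set eN : Fin p → ℕ := fun l => (e l : ℕ) with heNdef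
  have heNmono : StrictMono eN := fun a b hab => by
    have := e.strictMono hab
    exact_mod_cast this
  have heNJ : ∀ l, eN l ∈ J := fun l => (e l).2
  have heNk : ∀ l, eN l ≤ k := by
    intro l
    have := heNJ l
    rw [hJdef, Finset.mem_filter, Finset.mem_range] at this
    omega
  -- signs
  classical
  set σs : ℕ → ℝ := fun j =>
    if h : (Scl η j).Nonempty then (if 0 < η h.choose then 1 else -1) else 1 with hσdef
  have hσval : ∀ j, σs j = 1 ∨ σs j = -1 := by
    intro j
    simp only [hσdef]
    split_ifs <;> simp
  have hσ : ∀ (j : ℕ) (ω : ℝ), ω ∈ Ccl η j → η ω ≠ 0 → 0 < σs j * η ω := by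
    intro j ω hmem hne
    have hωS : ω ∈ Scl η j := mem_Scl_of_mem_Ccl hη hmem hne
    have hnonempty : (Scl η j).Nonempty := ⟨ω, hωS⟩
    simp only [hσdef, dif_pos hnonempty]
    have hw : hnonempty.choose ∈ Scl η j := hnonempty.choose_spec
    have hprod := Scl_sign hη hw hωS
    by_cases hpos : 0 < η hnonempty.choose
    · rw [if_pos hpos, one_mul]
      rcases mul_pos_iff.mp hprod with ⟨_, h2⟩ | ⟨h1, _⟩
      · exact h2
      · linarith
    · rw [if_neg hpos]
      rcases mul_pos_iff.mp hprod with ⟨h1, _⟩ | ⟨_, h2⟩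
      · exact absurd h1 hpos
      · linarith
  set τ : ℝ := ∏ l : Fin p, σs (eN l) with hτdef
  -- rows
  have hp2 : p + 1 ≤ k + 2 := by omega
  set y : Fin (p + 1) → ℝ := fun s => x (Fin.castLE hp2 s) with hydef
  have hy : StrictMono y := fun i j hij => hx (by simp only [Fin.lt_def, Fin.coe_castLE]; exact hij)
  set vv : Fin (p + 1) → ℝ := fun s => v (Fin.castLE hp2 s) with hvvdef
  have hvv : ∀ s, vv s = ∑ l : Fin p, colInt (eN l) (y s) := by
    intro s
    rw [hvvdef]
    simp only
    rw [hdecompJ (Fin.castLE hp2 s)]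
    rw [← Finset.sum_attach J (fun j => colInt j (x (Fin.castLE hp2 s)))]
    rw [hydef]
    exact (Equiv.sum_comp e.toEquiv (fun z => colInt (z : ℕ) (x (Fin.castLE hp2 s)))).symm
  -- the matrix
  set A : Matrix (Fin (p + 1)) (Fin (p + 1)) ℝ :=
    Matrix.of (fun s => Fin.cons (vv s) (fun l : Fin p => colInt (eN l) (y s))) with hAdef
  have hA0 : ∀ s, A s 0 = vv s := fun s => rfl
  have hAsucc : ∀ s (l : Fin p), A s l.succ = colInt (eN l) (y s) := fun s l => by
    simp [hAdef, Fin.cons_succ]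
  have hdetA : A.det = 0 := by
    set c : Fin (p + 1) → ℝ := fun i => if i = 0 then 0 else 1 with hcdef
    have hc : (fun s => ∑ i : Fin (p + 1), c i • A s i) = fun s => A s 0 := by
      funext s
      rw [Fin.sum_univ_succ]
      simp only [hcdef, if_pos rfl, zero_smul, zero_add]
      have : ∀ l : Fin p, (if l.succ = (0 : Fin (p + 1)) then (0:ℝ) else 1) • A s l.succ
          = A s l.succ := by
        intro l
        rw [if_neg (Fin.succ_ne_zero l), one_smul]
      rw [Finset.sum_congr rfl fun l _ => this l]
      rw [hA0 s, hvv s]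
      exact Finset.sum_congr rfl fun l _ => (hAsucc s l).symm
    have h1 := Matrix.det_updateCol_sum A 0 c
    rw [hc, Matrix.updateCol_eq_self] at h1
    rw [hcdef] at h1
    simpa using h1
  have minor_pos : ∀ s0 : Fin (p + 1), 0 < τ * (A.submatrix s0.succAbove Fin.succ).det := by
    intro s0
    set z : Fin p → ℝ := fun s => y (s0.succAbove s) with hzdef
    have hz : StrictMono z := hy.comp (Fin.strictMono_succAbove s0)
    set ψ : Fin p → ℝ → ℝ := fun l => (Ccl η (eN l)).indicator η with hψdef
    set F : Fin p → ℝ → ℝ := fun s => f (z s) with hFdef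
    have hsub : A.submatrix s0.succAbove Fin.succ
        = Matrix.of fun s l : Fin p => ∫ ω, ψ l ω * F s ω := by
      ext s l
      simp only [Matrix.submatrix_apply, Matrix.of_apply]
      rw [hAsucc]
    rw [hsub, det_integral ψ F (fun s l => hIntInd (eN l) (z s)), ← integral_const_mul]
    have hkey : ∀ ω : Fin p → ℝ,
        0 ≤ τ * (Matrix.of fun s l : Fin p => ψ l (ω l) * F s (ω l)).det ∧
        ((∏ l : Fin p, |ψ l (ω l)| * f (x 0) (ω l)) ≠ 0 →
          0 < τ * (Matrix.of fun s l : Fin p => ψ l (ω l) * F s (ω l)).det) := by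
      intro ω
      have hfact : (Matrix.of fun s l : Fin p => ψ l (ω l) * F s (ω l)).det
          = (∏ l, ψ l (ω l)) * (Matrix.of fun s l : Fin p => F s (ω l)).det :=
        Matrix.det_mul_row (fun l => ψ l (ω l)) _
      by_cases hall : ∀ l, ω l ∈ Ccl η (eN l) ∧ η (ω l) ≠ 0
      · have hψη : ∀ l, ψ l (ω l) = η (ω l) := fun l => Set.indicator_of_mem (hall l).1 _
        have hmono : StrictMono ω := by
          intro a b hab
          exact Scl_lt hη (mem_Scl_of_mem_Ccl hη (hall a).1 (hall a).2)
            (mem_Scl_of_mem_Ccl hη (hall b).1 (hall b).2) (heNmono hab)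
        have hdetF : 0 < (Matrix.of fun s l : Fin p => F s (ω l)).det := hf.2 p z ω hz hmono
        have hprod : 0 < ∏ l, σs (eN l) * η (ω l) :=
          Finset.prod_pos fun l _ => hσ (eN l) (ω l) (hall l).1 (hall l).2
        have hψprod : (∏ l, ψ l (ω l)) = ∏ l, η (ω l) :=
          Finset.prod_congr rfl fun l _ => hψη l
        have heq : τ * (∏ l, ψ l (ω l)) = ∏ l, σs (eN l) * η (ω l) := by
          rw [hψprod, hτdef, ← Finset.prod_mul_distrib]
        have hpos : 0 < τ * (Matrix.of fun s l : Fin p => ψ l (ω l) * F s (ω l)).det := by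
          rw [hfact, ← mul_assoc, heq]
          exact mul_pos hprod hdetF
        exact ⟨hpos.le, fun _ => hpos⟩
      · push_neg at hall
        obtain ⟨l0, hl0⟩ := hall
        have hψ0 : ψ l0 (ω l0) = 0 := by
          by_cases hm : ω l0 ∈ Ccl η (eN l0)
          · rw [hψdef]
            simp only
            rw [Set.indicator_of_mem hm]
            exact hl0 hm
          · exact Set.indicator_of_notMem hm _
        have hzero : (Matrix.of fun s l : Fin p => ψ l (ω l) * F s (ω l)).det = 0 := by
          rw [hfact, Finset.prod_eq_zero (Finset.mem_univ l0) hψ0, zero_mul]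
        refine ⟨by rw [hzero, mul_zero], fun hW => ?_⟩
        exfalso
        apply hW
        apply Finset.prod_eq_zero (Finset.mem_univ l0)
        rw [hψ0, abs_zero, zero_mul]
    set G : (Fin p → ℝ) → ℝ :=
      fun ω => τ * (Matrix.of fun s l : Fin p => ψ l (ω l) * F s (ω l)).det with hGdef
    have hGint : Integrable G := by
      rw [hGdef]
      have hdet_eq : (fun ω : Fin p → ℝ => (Matrix.of fun s l : Fin p => ψ l (ω l) * F s (ω l)).det)
          = fun ω => ∑ σp : Equiv.Perm (Fin p),
              ((Equiv.Perm.sign σp : ℤ) : ℝ) * ∏ l, ψ l (ω l) * F (σp l) (ω l) := by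
        funext ω
        exact Matrix.det_apply' _
      have hdet_int : Integrable
          (fun ω : Fin p → ℝ => (Matrix.of fun s l : Fin p => ψ l (ω l) * F s (ω l)).det) := by
        rw [hdet_eq]
        apply integrable_finset_sum
        intro σp _
        exact (Integrable.fintype_prod (f := fun l ω' => ψ l ω' * F (σp l) ω')
          (fun l => hIntInd (eN l) (z (σp l)))).const_mul _
      exact hdet_int.const_mul τ
    have hGnn : 0 ≤ G := fun ω => (hkey ω).1
    rcases lt_or_eq_of_le (integral_nonneg hGnn) with hpos | heq0
    · exact hpos
    exfalso
    have hG0 : G =ᵐ[volume] 0 := (integral_eq_zero_iff_of_nonneg hGnn hGint).mp heq0.symm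
    have hW0 : (fun ω : Fin p → ℝ => ∏ l, |ψ l (ω l)| * f (x 0) (ω l)) =ᵐ[volume] 0 := by
      filter_upwards [hG0] with ω hω
      simp only [Pi.zero_apply] at hω ⊢
      by_contra hWne
      have h2 : (0 : ℝ) < G ω := (hkey ω).2 hWne
      linarith
    have hWint : ∫ ω : Fin p → ℝ, ∏ l, |ψ l (ω l)| * f (x 0) (ω l) = ∏ l, ν (eN l) := by
      rw [MeasureTheory.integral_fintype_prod_volume_eq_prod (ι := Fin p)
        (fun l ω' => |ψ l ω'| * f (x 0) ω')]
    have hνpos : 0 < ∏ l, ν (eN l) :=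
      Finset.prod_pos fun l _ => (Finset.mem_filter.mp (heNJ l)).2
    have hcontra : (0 : ℝ) < 0 := by
      calc (0 : ℝ) < ∏ l, ν (eN l) := hνpos
        _ = ∫ ω : Fin p → ℝ, ∏ l, |ψ l (ω l)| * f (x 0) (ω l) := hWint.symm
        _ = 0 := by rw [integral_congr_ae hW0]; simp
    exact lt_irrefl 0 hcontra
  -- final contradiction
  have hexp := Matrix.det_succ_column_zero A
  have hterm : ∀ s : Fin (p + 1),
      0 < (v 0 * τ) * ((-1 : ℝ) ^ (s : ℕ) * A s 0 * (A.submatrix s.succAbove Fin.succ).det) := by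
    intro s
    have h1 := hsign (Fin.castLE hp2 s)
    have h2 := minor_pos s
    have hcast : ((Fin.castLE hp2 s : Fin (k + 2)) : ℕ) = (s : ℕ) := rfl
    rw [hcast] at h1
    have hA0s : A s 0 = v (Fin.castLE hp2 s) := hA0 s
    rw [hA0s]
    have : (v 0 * τ) * ((-1 : ℝ) ^ (s : ℕ) * v (Fin.castLE hp2 s)
        * (A.submatrix s.succAbove Fin.succ).det)
      = ((-1 : ℝ) ^ (s : ℕ) * (v 0 * v (Fin.castLE hp2 s)))
        * (τ * (A.submatrix s.succAbove Fin.succ).det) := by ring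
    rw [this]
    exact mul_pos h1 h2
  have hsum : 0 < ∑ s : Fin (p + 1),
      (v 0 * τ) * ((-1 : ℝ) ^ (s : ℕ) * A s 0 * (A.submatrix s.succAbove Fin.succ).det) :=
    Finset.sum_pos (fun s _ => hterm s) ⟨0, Finset.mem_univ _⟩
  rw [← Finset.mul_sum, ← hexp, hdetA, mul_zero] at hsum
  exact lt_irrefl 0 hsum
end

section
/- For σ₁, σ₂ > 0 with σ₁² < σ₂², the function c ↦ ∫_{σ₁²}^{σ₂²} [ c²/((√s/2 + sqrt(s/4 + c²))²) + c²(c²+s)/((s/2 + sqrt(s²/4 + c²(c²+s)))²) − 1 ] / s² ds is continuous on [0, ∞), equals −(1/σ₁² − 1/σ₂²) < 0 at c = 0, tends to +(1/σ₁² − 1/σ₂²) > 0 as c → ∞, and hence has a zero c(σ₁², σ₂²) ∈ (0, ∞). -/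
open MeasureTheory Filter

lemma key_tendsto (a b : ℝ) (ha : 0 ≤ a) (hb : 0 ≤ b) :
    Tendsto (fun u : ℝ => u / (a + Real.sqrt (b + u)) ^ 2) atTop (nhds 1) := by
  have h0 : Tendsto (fun u : ℝ => a / Real.sqrt u) atTop (nhds 0) := by
    have h1 : Tendsto (fun u : ℝ => Real.sqrt (u⁻¹)) atTop (nhds 0) := by
      have := (Real.continuous_sqrt.tendsto 0).comp tendsto_inv_atTop_zero
      simpa [Function.comp_def] using this
    have := h1.const_mul a
    simp only [mul_zero] at this
    refine this.congr (fun u => ?_)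
    rw [Real.sqrt_inv]
    ring
  have h2 : Tendsto (fun u : ℝ => Real.sqrt (b / u + 1)) atTop (nhds 1) := by
    have hb1 : Tendsto (fun u : ℝ => b / u + 1) atTop (nhds 1) := by
      have := (tendsto_inv_atTop_zero.const_mul b)
      have h := this.add_const 1
      simp only [mul_zero, zero_add] at h
      refine h.congr fun u => by rw [div_eq_mul_inv]
    have := (Real.continuous_sqrt.tendsto 1).comp hb1
    simpa [Function.comp_def] using this
  have h3 : Tendsto (fun u : ℝ => (a / Real.sqrt u + Real.sqrt (b / u + 1)) ^ 2) atTop (nhds 1) := by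
    have := (h0.add h2).pow 2
    simpa using this
  have h4 : Tendsto (fun u : ℝ => ((a / Real.sqrt u + Real.sqrt (b / u + 1)) ^ 2)⁻¹) atTop
      (nhds 1) := by
    simpa using h3.inv₀ one_ne_zero
  refine h4.congr' ?_
  filter_upwards [eventually_gt_atTop 0] with u hu
  have hsu : (0:ℝ) < Real.sqrt u := Real.sqrt_pos.2 hu
  have hbu : Real.sqrt (b / u + 1) = Real.sqrt (b + u) / Real.sqrt u := by
    rw [← Real.sqrt_div (by linarith)]
    congr 1
    field_simp
  have hEq : a / Real.sqrt u + Real.sqrt (b / u + 1) = (a + Real.sqrt (b + u)) / Real.sqrt u := by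
    rw [hbu]; ring
  rw [hEq, div_pow, Real.sq_sqrt hu.le]
  rw [inv_div]

lemma integral_inv_sq_Ioc (a b : ℝ) (ha : 0 < a) (hab : a ≤ b) :
    ∫ s in Set.Ioc a b, (s ^ 2)⁻¹ = 1 / a - 1 / b := by
  rw [← intervalIntegral.integral_of_le hab]
  have h0 : (0:ℝ) ∉ Set.uIcc a b := by
    rw [Set.uIcc_of_le hab]
    intro h
    exact absurd h.1 (by linarith)
  have h := integral_zpow (a := a) (b := b) (n := -2) (Or.inr ⟨by norm_num, h0⟩)
  have hfe : ∀ x : ℝ, x ^ (-2 : ℤ) = (x ^ 2)⁻¹ := by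
    intro x
    rw [zpow_neg]
    norm_num
  simp only [hfe] at h
  rw [h]
  norm_num
  ring

lemma term1_tendsto (s : ℝ) (hs : 0 < s) :
    Tendsto (fun c : ℝ => c ^ 2 / (Real.sqrt s / 2 + Real.sqrt (s / 4 + c ^ 2)) ^ 2)
      atTop (nhds 1) := by
  have h := (key_tendsto (Real.sqrt s / 2) (s / 4) (by positivity) (by positivity)).comp
    (tendsto_pow_atTop (n := 2) (by norm_num) : Tendsto (fun c : ℝ => c ^ 2) atTop atTop)
  simpa [Function.comp_def] using h

lemma term2_tendsto (s : ℝ) (hs : 0 < s) :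
    Tendsto (fun c : ℝ => c ^ 2 * (c ^ 2 + s) /
      (s / 2 + Real.sqrt (s ^ 2 / 4 + c ^ 2 * (c ^ 2 + s))) ^ 2) atTop (nhds 1) := by
  have hsq : Tendsto (fun c : ℝ => c ^ 2) atTop atTop :=
    tendsto_pow_atTop (by norm_num)
  have hmul : Tendsto (fun c : ℝ => c ^ 2 * (c ^ 2 + s)) atTop atTop :=
    hsq.atTop_mul_atTop₀ (tendsto_atTop_add_const_right _ s hsq)
  have h := (key_tendsto (s / 2) (s ^ 2 / 4) (by positivity) (by positivity)).comp hmul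
  simpa [Function.comp_def] using h

theorem asymptotic_radius_equation_has_zero (σ₁ σ₂ : ℝ) (hσ₁ : 0 < σ₁)
    (hσ : σ₁ ^ 2 < σ₂ ^ 2) (g : ℝ → ℝ)
    (hg : ∀ c : ℝ, g c = ∫ s in Set.Ioc (σ₁ ^ 2) (σ₂ ^ 2),
        (c ^ 2 / (Real.sqrt s / 2 + Real.sqrt (s / 4 + c ^ 2)) ^ 2 +
          c ^ 2 * (c ^ 2 + s) /
            (s / 2 + Real.sqrt (s ^ 2 / 4 + c ^ 2 * (c ^ 2 + s))) ^ 2 - 1) / s ^ 2) :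
    ContinuousOn g (Set.Ici 0) ∧
    g 0 = -(1 / σ₁ ^ 2 - 1 / σ₂ ^ 2) ∧
    -(1 / σ₁ ^ 2 - 1 / σ₂ ^ 2) < 0 ∧
    Tendsto g atTop (nhds (1 / σ₁ ^ 2 - 1 / σ₂ ^ 2)) ∧
    0 < 1 / σ₁ ^ 2 - 1 / σ₂ ^ 2 ∧
    ∃ c : ℝ, 0 < c ∧ g c = 0 := by
  have ha : (0:ℝ) < σ₁ ^ 2 := by positivity
  set F : ℝ → ℝ → ℝ := fun c s =>
    (c ^ 2 / (Real.sqrt s / 2 + Real.sqrt (s / 4 + c ^ 2)) ^ 2 +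
      c ^ 2 * (c ^ 2 + s) /
        (s / 2 + Real.sqrt (s ^ 2 / 4 + c ^ 2 * (c ^ 2 + s))) ^ 2 - 1) / s ^ 2 with hF
  set μ : Measure ℝ := volume.restrict (Set.Ioc (σ₁ ^ 2) (σ₂ ^ 2)) with hμ
  -- pointwise bounds on the set
  have hfrac : ∀ c : ℝ, ∀ s : ℝ, 0 < s →
      (0 ≤ c ^ 2 / (Real.sqrt s / 2 + Real.sqrt (s / 4 + c ^ 2)) ^ 2 ∧
       c ^ 2 / (Real.sqrt s / 2 + Real.sqrt (s / 4 + c ^ 2)) ^ 2 ≤ 1) ∧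
      (0 ≤ c ^ 2 * (c ^ 2 + s) /
          (s / 2 + Real.sqrt (s ^ 2 / 4 + c ^ 2 * (c ^ 2 + s))) ^ 2 ∧
       c ^ 2 * (c ^ 2 + s) /
          (s / 2 + Real.sqrt (s ^ 2 / 4 + c ^ 2 * (c ^ 2 + s))) ^ 2 ≤ 1) := by
    intro c s hs
    have hss : (0:ℝ) < Real.sqrt s := Real.sqrt_pos.2 hs
    have h1 : |c| ≤ Real.sqrt s / 2 + Real.sqrt (s / 4 + c ^ 2) := by
      have : |c| = Real.sqrt (c ^ 2) := (Real.sqrt_sq_eq_abs c).symm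
      rw [this]
      have := Real.sqrt_le_sqrt (show c ^ 2 ≤ s / 4 + c ^ 2 by linarith)
      linarith
    have hd1 : (0:ℝ) < Real.sqrt s / 2 + Real.sqrt (s / 4 + c ^ 2) := by
      have := Real.sqrt_nonneg (s / 4 + c ^ 2)
      linarith
    have hle1 : c ^ 2 ≤ (Real.sqrt s / 2 + Real.sqrt (s / 4 + c ^ 2)) ^ 2 := by
      calc c ^ 2 = |c| ^ 2 := (sq_abs c).symm
      _ ≤ (Real.sqrt s / 2 + Real.sqrt (s / 4 + c ^ 2)) ^ 2 :=
        pow_le_pow_left₀ (abs_nonneg c) h1 2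
    have hnum2 : (0:ℝ) ≤ c ^ 2 * (c ^ 2 + s) := by positivity
    have h2 : Real.sqrt (c ^ 2 * (c ^ 2 + s)) ≤
        s / 2 + Real.sqrt (s ^ 2 / 4 + c ^ 2 * (c ^ 2 + s)) := by
      have := Real.sqrt_le_sqrt
        (show c ^ 2 * (c ^ 2 + s) ≤ s ^ 2 / 4 + c ^ 2 * (c ^ 2 + s) by nlinarith)
      linarith
    have hd2 : (0:ℝ) < s / 2 + Real.sqrt (s ^ 2 / 4 + c ^ 2 * (c ^ 2 + s)) := by
      have := Real.sqrt_nonneg (s ^ 2 / 4 + c ^ 2 * (c ^ 2 + s))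
      linarith
    have hle2 : c ^ 2 * (c ^ 2 + s) ≤
        (s / 2 + Real.sqrt (s ^ 2 / 4 + c ^ 2 * (c ^ 2 + s))) ^ 2 := by
      calc c ^ 2 * (c ^ 2 + s) = Real.sqrt (c ^ 2 * (c ^ 2 + s)) ^ 2 :=
            (Real.sq_sqrt hnum2).symm
      _ ≤ (s / 2 + Real.sqrt (s ^ 2 / 4 + c ^ 2 * (c ^ 2 + s))) ^ 2 :=
        pow_le_pow_left₀ (Real.sqrt_nonneg _) h2 2
    refine ⟨⟨by positivity, ?_⟩, ⟨by positivity, ?_⟩⟩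
    · exact div_le_one_of_le₀ hle1 (by positivity)
    · exact div_le_one_of_le₀ hle2 (by positivity)
  have hbound : ∀ c : ℝ, ∀ s : ℝ, s ∈ Set.Ioc (σ₁ ^ 2) (σ₂ ^ 2) →
      ‖F c s‖ ≤ ((σ₁ ^ 2) ^ 2)⁻¹ := by
    intro c s hsmem
    have hs : 0 < s := lt_trans ha hsmem.1
    obtain ⟨⟨h10, h11⟩, ⟨h20, h21⟩⟩ := hfrac c s hs
    have hnum : |c ^ 2 / (Real.sqrt s / 2 + Real.sqrt (s / 4 + c ^ 2)) ^ 2 +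
        c ^ 2 * (c ^ 2 + s) /
          (s / 2 + Real.sqrt (s ^ 2 / 4 + c ^ 2 * (c ^ 2 + s))) ^ 2 - 1| ≤ 1 := by
      rw [abs_le]; constructor <;> linarith
    have hs2 : (σ₁ ^ 2) ^ 2 ≤ s ^ 2 := by nlinarith [hsmem.1]
    rw [hF]
    simp only [Real.norm_eq_abs]
    rw [abs_div, abs_of_nonneg (by positivity : (0:ℝ) ≤ s ^ 2)]
    calc _ ≤ 1 / s ^ 2 := by
          apply div_le_div_of_nonneg_right hnum (by positivity) |>.trans_eq rfl
      _ ≤ ((σ₁ ^ 2) ^ 2)⁻¹ := by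
          rw [one_div]
          exact inv_anti₀ (by positivity) hs2
  have hmeas : ∀ c : ℝ, AEStronglyMeasurable (F c) μ := by
    intro c
    apply Measurable.aestronglyMeasurable
    rw [hF]
    fun_prop
  have hbound' : ∀ c : ℝ, ∀ᵐ s ∂μ, ‖F c s‖ ≤ ((σ₁ ^ 2) ^ 2)⁻¹ := by
    intro c
    rw [hμ]
    exact (ae_restrict_iff' measurableSet_Ioc).2 (ae_of_all _ fun s hs => hbound c s hs)
  have hint : Integrable (fun _ : ℝ => ((σ₁ ^ 2) ^ 2)⁻¹) μ := by
    rw [hμ]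
    exact integrableOn_const measure_Ioc_lt_top.ne
  have haes : ∀ᵐ s ∂μ, 0 < s := by
    rw [hμ]
    exact (ae_restrict_iff' measurableSet_Ioc).2 (ae_of_all _ fun s hs => lt_trans ha hs.1)
  have hcont_c : ∀ s : ℝ, 0 < s → Continuous fun c => F c s := by
    intro s hs
    have hss : (0:ℝ) < Real.sqrt s := Real.sqrt_pos.2 hs
    rw [hF]
    apply Continuous.div _ continuous_const (fun c => by positivity)
    apply Continuous.sub _ continuous_const
    apply Continuous.add
    · refine Continuous.div (by fun_prop) (by fun_prop) (fun c => ?_)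
      have h1 : (0:ℝ) < Real.sqrt s / 2 + Real.sqrt (s / 4 + c ^ 2) := by
        have := Real.sqrt_nonneg (s / 4 + c ^ 2)
        linarith
      positivity
    · refine Continuous.div (by fun_prop) (by fun_prop) (fun c => ?_)
      have h2 : (0:ℝ) < s / 2 + Real.sqrt (s ^ 2 / 4 + c ^ 2 * (c ^ 2 + s)) := by
        have := Real.sqrt_nonneg (s ^ 2 / 4 + c ^ 2 * (c ^ 2 + s))
        linarith
      positivity
  have hcontInt : Continuous fun c => ∫ s, F c s ∂μ :=
    continuous_of_dominated hmeas hbound' hint (haes.mono fun s hs => hcont_c s hs)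
  have hgc : Continuous g := hcontInt.congr fun c => (hg c).symm
  have hg0 : g 0 = -(1 / σ₁ ^ 2 - 1 / σ₂ ^ 2) := by
    rw [hg 0]
    have hcongr : ∫ s in Set.Ioc (σ₁ ^ 2) (σ₂ ^ 2),
        ((0:ℝ) ^ 2 / (Real.sqrt s / 2 + Real.sqrt (s / 4 + 0 ^ 2)) ^ 2 +
          0 ^ 2 * (0 ^ 2 + s) /
            (s / 2 + Real.sqrt (s ^ 2 / 4 + 0 ^ 2 * (0 ^ 2 + s))) ^ 2 - 1) / s ^ 2 =
        ∫ s in Set.Ioc (σ₁ ^ 2) (σ₂ ^ 2), -((s ^ 2)⁻¹) := by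
      apply integral_congr_ae
      filter_upwards with s
      norm_num [neg_div]
    rw [hcongr, integral_neg, integral_inv_sq_Ioc _ _ ha hσ.le]
  have hL : 0 < 1 / σ₁ ^ 2 - 1 / σ₂ ^ 2 := by
    have hb : (0:ℝ) < σ₂ ^ 2 := lt_trans ha hσ
    have := one_div_lt_one_div_of_lt ha hσ
    linarith
  have htendF : ∀ᵐ s ∂μ, Tendsto (fun c => F c s) atTop (nhds ((s ^ 2)⁻¹)) := by
    refine haes.mono fun s hs => ?_
    have h := (((term1_tendsto s hs).add (term2_tendsto s hs)).sub
      (tendsto_const_nhds (x := (1:ℝ)))).div_const (s ^ 2)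
    norm_num at h
    exact h
  have htend : Tendsto (fun c => ∫ s, F c s ∂μ) atTop (nhds (∫ s, (s ^ 2)⁻¹ ∂μ)) :=
    tendsto_integral_filter_of_dominated_convergence _ (Eventually.of_forall hmeas)
      (Eventually.of_forall hbound') hint htendF
  have hval : ∫ s, (s ^ 2)⁻¹ ∂μ = 1 / σ₁ ^ 2 - 1 / σ₂ ^ 2 := by
    rw [hμ]
    exact integral_inv_sq_Ioc _ _ ha hσ.le
  have hgt : Tendsto g atTop (nhds (1 / σ₁ ^ 2 - 1 / σ₂ ^ 2)) := by
    rw [← hval]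
    exact htend.congr fun c => (hg c).symm
  have hev : ∀ᶠ c in atTop, (1 / σ₁ ^ 2 - 1 / σ₂ ^ 2) / 2 < g c :=
    hgt.eventually (eventually_gt_nhds (by linarith))
  obtain ⟨C, hC1, hC2⟩ := (hev.and (eventually_ge_atTop (1:ℝ))).exists
  have h0C : (0:ℝ) ≤ C := le_trans zero_le_one hC2
  have h0mem : (0:ℝ) ∈ Set.Icc (g 0) (g C) := by
    constructor
    · rw [hg0]; linarith
    · linarith
  obtain ⟨c, hcmem, hc0⟩ := intermediate_value_Icc h0C hgc.continuousOn h0mem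
  have hcpos : 0 < c := by
    rcases hcmem.1.lt_or_eq with h | h
    · exact h
    · exfalso
      rw [← h] at hc0
      rw [hg0] at hc0
      linarith
  exact ⟨hgc.continuousOn, hg0, by linarith, hgt, hL, c, hcpos, hc0⟩
end
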